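/- Let q be a prime power and let C(q+1, u) be a 1-level EII code over F = GF(q) with n = q+1, m ≤ q²+1, 2 ≤ s1 ≤ m−1, u0 = q−1, u1 = q+1, horizontal code C0 a [q+1, 2, q] MDS code over GF(q) (e.g., a doubly extended Reed–Solomon code), and vertical code V0 an [m, m−s1, s1+1] MDS code over F² linear over F (e.g., a shortened doubly extended Reed–Solomon code over GF(q²)). Then C(q+1,u) has dimension k = 2(m−s1), its minimum distance is d = q(s1+1), and it meets bound (3): q(s1+1) = min{ d_opt^{(q)}[(m−j)(q+1), k − 2j] : 0 ≤ j ≤ ⌈k/2⌉ − 1 }. -/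

import Mathlib

open scoped BigOperators

section Defs

variable {F : Type*} [Field F]

/-- `C` has minimum (symbol-)Hamming distance exactly `d`. -/
def HasMinDist {ι S : Type*} [Fintype ι] [Zero S] [DecidableEq S]
    (C : Set (ι → S)) (d : ℕ) : Prop :=
  (∀ c ∈ C, c ≠ 0 → d ≤ hammingNorm c) ∧ ∃ c ∈ C, c ≠ 0 ∧ hammingNorm c = d

/-- `C` has minimum (symbol-)Hamming distance at least `d`. -/
def MinDistAtLeast {ι S : Type*} [Fintype ι] [Zero S] [DecidableEq S]
    (C : Set (ι → S)) (d : ℕ) : Prop :=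
  ∀ c ∈ C, c ≠ 0 → d ≤ hammingNorm c

/-- weight of an `m × n` array: the number of nonzero entries. -/
def arrayWt [DecidableEq F] {m n : ℕ} (A : Matrix (Fin m) (Fin n) F) : ℕ :=
  hammingNorm (fun p : Fin m × Fin n => A p.1 p.2)

/-- `C` admits a systematic encoder on its first `k` coordinates. -/
def SystematicOn {n : ℕ} (C : Submodule F (Fin n → F)) (k : ℕ) : Prop :=
  Function.Bijective (fun (c : C) (i : Fin k) =>
    if h : (i : ℕ) < n then (c : Fin n → F) ⟨i, h⟩ else 0)

/-- symbols of the array in columns `a, a+1, ..., a+w-1`. -/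
def colSymb [Zero F] {m n : ℕ} (A : Matrix (Fin m) (Fin n) F) (a w : ℕ) :
    Fin m → Fin w → F :=
  fun r k => if hk : a + (k : ℕ) < n then A r ⟨a + k, hk⟩ else 0

/-- the 1-level EII code with horizontal code `C0`, vertical code `V0` over `F^w`
(occupying columns `a,…,a+w-1`), and `a` initial zero columns. -/
def OneLevelEII {m n w : ℕ} (C0 : Submodule F (Fin n → F))
    (V0 : Submodule F (Fin m → Fin w → F)) (a : ℕ) :
    Set (Matrix (Fin m) (Fin n) F) :=
  { A | (∀ r (c : Fin n), (c : ℕ) < a → A r c = 0) ∧ (∀ r, A r ∈ C0) ∧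
        colSymb A a w ∈ V0 }

/-- `d_opt^{(q)}[N,K]`: the largest minimum distance of a linear `[N,K]` code over `F`. -/
noncomputable def dOpt (F : Type*) [Field F] [DecidableEq F] (N K : ℕ) : ℕ :=
  sSup {d : ℕ | ∃ C : Submodule F (Fin N → F),
    Module.finrank F C = K ∧ HasMinDist (C : Set (Fin N → F)) d}

/-- `k_opt^{(q)}[N,D]`: the largest dimension of a linear code of length `N` and
minimum distance at least `D` over `F`. -/
noncomputable def kOpt (F : Type*) [Field F] [DecidableEq F] (N D : ℕ) : ℕ :=
  sSup {k : ℕ | ∃ C : Submodule F (Fin N → F),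
    Module.finrank F C = k ∧ MinDistAtLeast (C : Set (Fin N → F)) D}

end Defs


section AuxGeneric

variable {ι κ S : Type*} [Fintype ι] [Fintype κ] [Zero S] [DecidableEq S]

lemma hammingNorm_comp_equiv (σ : κ ≃ ι) (x : ι → S) :
    hammingNorm (fun t => x (σ t)) = hammingNorm x := by
  unfold hammingNorm
  exact Finset.card_bij' (fun t _ => σ t) (fun i _ => σ.symm i)
    (by simp) (by simp) (by simp) (by simp)

lemma card_filter_fin_lt {b a : ℕ} (hab : a ≤ b) :
    ((Finset.univ : Finset (Fin b)).filter fun r : Fin b => (r : ℕ) < a).card = a := by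
  have : ((Finset.univ : Finset (Fin b)).filter fun r : Fin b => (r : ℕ) < a) =
      Finset.map (Fin.castLEEmb hab) Finset.univ := by
    ext r
    simp only [Finset.mem_filter, Finset.mem_map, Finset.mem_univ, true_and]
    constructor
    · rintro hr
      exact ⟨⟨(r : ℕ), hr⟩, by simp [Fin.castLEEmb, Fin.castLE]⟩
    · rintro ⟨t, rfl⟩
      simpa using t.2
  rw [this, Finset.card_map, Finset.card_univ, Fintype.card_fin]

lemma hasMinDist_sInf {C : Set (ι → S)} (h : ∃ c ∈ C, c ≠ 0) :
    HasMinDist C (sInf {d : ℕ | ∃ c ∈ C, c ≠ 0 ∧ hammingNorm c = d}) := by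
  have hne : {d : ℕ | ∃ c ∈ C, c ≠ 0 ∧ hammingNorm c = d}.Nonempty := by
    obtain ⟨c, hc, hc0⟩ := h; exact ⟨hammingNorm c, c, hc, hc0, rfl⟩
  constructor
  · intro c hc hc0
    exact Nat.sInf_le ⟨c, hc, hc0, rfl⟩
  · exact Nat.sInf_mem hne

end AuxGeneric

section Machinery

variable {F : Type*} [Field F] [Fintype F] [DecidableEq F]

lemma arrayWt_eq_sum {m n : ℕ} (A : Matrix (Fin m) (Fin n) F) :
    arrayWt A = ∑ r : Fin m, hammingNorm (A r) := by
  unfold arrayWt hammingNorm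
  rw [Finset.card_eq_sum_card_fiberwise
    (f := fun p : Fin m × Fin n => p.1) (t := Finset.univ) (by simp)]
  refine Finset.sum_congr rfl fun r _ => ?_
  refine Finset.card_bij' (fun p _ => p.2) (fun c _ => (r, c)) ?_ ?_ ?_ ?_
  · rintro ⟨a, b⟩ hp
    simp only [Finset.mem_filter, Finset.mem_univ, true_and] at hp ⊢
    rcases hp with ⟨h1, h2⟩; subst h2; exact h1
  · intro c hc
    simp only [Finset.mem_filter, Finset.mem_univ, true_and] at hc ⊢
    simp [hc]
  · rintro ⟨a, b⟩ hp
    simp only [Finset.mem_filter, Finset.mem_univ, true_and] at hp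
    rcases hp with ⟨h1, h2⟩; subst h2; rfl
  · intro c hc; rfl

/-- the projection onto the first `k` coordinates (extended by zero), as a linear map. -/
def sysMap (F : Type*) [Field F] (n k : ℕ) : (Fin n → F) →ₗ[F] (Fin k → F) where
  toFun c := fun i => if h : (i : ℕ) < n then c ⟨i, h⟩ else 0
  map_add' x y := by funext i; by_cases h : (i : ℕ) < n <;> simp [h]
  map_smul' a x := by funext i; by_cases h : (i : ℕ) < n <;> simp [h]

@[simp] lemma sysMap_apply {n k : ℕ} (c : Fin n → F) (i : Fin k) :
    sysMap F n k c i = if h : (i : ℕ) < n then c ⟨i, h⟩ else 0 := rfl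

lemma colSymb_eq_sysMap {q m : ℕ} (A : Matrix (Fin m) (Fin (q + 1)) F) (r : Fin m) :
    colSymb A 0 ((q + 1) - (q - 1)) r = sysMap F (q + 1) ((q + 1) - (q - 1)) (A r) := by
  funext i
  show (if hk : 0 + (i : ℕ) < q + 1 then A r ⟨0 + (i : ℕ), hk⟩ else 0) = _
  simp only [zero_add, sysMap_apply]

/-- the systematic encoder as a linear equivalence. -/
noncomputable def sysEquiv {q : ℕ} (C0 : Submodule F (Fin (q + 1) → F))
    (h : SystematicOn C0 ((q + 1) - (q - 1))) :
    C0 ≃ₗ[F] (Fin ((q + 1) - (q - 1)) → F) :=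
  LinearEquiv.ofBijective ((sysMap F (q + 1) ((q + 1) - (q - 1))).comp C0.subtype) h

lemma sysEquiv_apply {q : ℕ} (C0 : Submodule F (Fin (q + 1) → F))
    (h : SystematicOn C0 ((q + 1) - (q - 1))) (c : C0) :
    sysEquiv C0 h c = sysMap F (q + 1) ((q + 1) - (q - 1)) (c : Fin (q + 1) → F) := rfl

/-- encoding a vector of symbols row-by-row through the systematic encoder. -/
noncomputable def rowEnc {q : ℕ} (C0 : Submodule F (Fin (q + 1) → F))
    (h : SystematicOn C0 ((q + 1) - (q - 1))) (m : ℕ) :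
    (Fin m → Fin ((q + 1) - (q - 1)) → F) →ₗ[F] Matrix (Fin m) (Fin (q + 1)) F where
  toFun v := fun r c => ((sysEquiv C0 h).symm (v r) : Fin (q + 1) → F) c
  map_add' x y := by
    funext r c
    simp [Pi.add_apply, map_add, Matrix.add_apply]
    rfl
  map_smul' a x := by
    funext r c
    simp [Pi.smul_apply, map_smul, Matrix.smul_apply]
    rfl

lemma rowEnc_row {q : ℕ} (C0 : Submodule F (Fin (q + 1) → F))
    (h : SystematicOn C0 ((q + 1) - (q - 1))) (m : ℕ)
    (v : Fin m → Fin ((q + 1) - (q - 1)) → F) (r : Fin m) :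
    rowEnc C0 h m v r = ((sysEquiv C0 h).symm (v r) : Fin (q + 1) → F) := rfl

lemma rowEnc_injective {q : ℕ} (C0 : Submodule F (Fin (q + 1) → F))
    (h : SystematicOn C0 ((q + 1) - (q - 1))) (m : ℕ) :
    Function.Injective (rowEnc C0 h m) := by
  intro x y hxy
  funext r
  have h1 : (sysEquiv C0 h).symm (x r) = (sysEquiv C0 h).symm (y r) := by
    apply Subtype.ext
    funext c
    exact congrFun (congrFun hxy r) c
  have := (sysEquiv C0 h).symm.injective h1
  exact this

lemma colSymb_rowEnc {q : ℕ} (C0 : Submodule F (Fin (q + 1) → F))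
    (h : SystematicOn C0 ((q + 1) - (q - 1))) (m : ℕ)
    (v : Fin m → Fin ((q + 1) - (q - 1)) → F) :
    colSymb (rowEnc C0 h m v) 0 ((q + 1) - (q - 1)) = v := by
  funext r
  rw [colSymb_eq_sysMap]
  calc sysMap F (q + 1) ((q + 1) - (q - 1)) ((rowEnc C0 h m v) r)
      = (sysEquiv C0 h) ((sysEquiv C0 h).symm (v r)) := rfl
    _ = v r := (sysEquiv C0 h).apply_symm_apply _

lemma map_rowEnc_carrier {q : ℕ} {C0 : Submodule F (Fin (q + 1) → F)}
    (h : SystematicOn C0 ((q + 1) - (q - 1))) {m : ℕ}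
    (V : Submodule F (Fin m → Fin ((q + 1) - (q - 1)) → F)) :
    ((V.map (rowEnc C0 h m) : Submodule F (Matrix (Fin m) (Fin (q + 1)) F)) :
      Set (Matrix (Fin m) (Fin (q + 1)) F)) = OneLevelEII C0 V 0 := by
  ext A
  constructor
  · rintro ⟨v, hv, rfl⟩
    refine ⟨fun r c hc => absurd hc (by omega), fun r => ?_, ?_⟩
    · exact ((sysEquiv C0 h).symm (v r)).2
    · rw [colSymb_rowEnc]; exact hv
  · rintro ⟨-, hrows, hsymb⟩
    refine ⟨colSymb A 0 ((q + 1) - (q - 1)), hsymb, ?_⟩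
    funext r c
    show ((sysEquiv C0 h).symm (colSymb A 0 ((q + 1) - (q - 1)) r) : Fin (q + 1) → F) c = A r c
    have : (sysEquiv C0 h).symm (colSymb A 0 ((q + 1) - (q - 1)) r) = ⟨A r, hrows r⟩ := by
      rw [LinearEquiv.symm_apply_eq, colSymb_eq_sysMap]
      rfl
    rw [this]

lemma sysMap_eq_zero_of_mem {q : ℕ} {C0 : Submodule F (Fin (q + 1) → F)}
    (h : SystematicOn C0 ((q + 1) - (q - 1)))
    {x : Fin (q + 1) → F} (hx : x ∈ C0)
    (h0 : sysMap F (q + 1) ((q + 1) - (q - 1)) x = 0) : x = 0 := by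
  have h1 : sysEquiv C0 h ⟨x, hx⟩ = sysEquiv C0 h 0 := by
    rw [sysEquiv_apply, h0, sysEquiv_apply]
    show (0 : Fin ((q + 1) - (q - 1)) → F) = sysMap F (q + 1) ((q + 1) - (q - 1)) ((0 : C0) : Fin (q + 1) → F)
    simp
  have := (sysEquiv C0 h).injective h1
  exact congrArg Subtype.val this

/-- every nonzero word of a `[q+1, ·, q]` code over `GF(q)` has weight exactly `q`. -/
lemma C0_weights {q : ℕ} (hq : Fintype.card F = q) {C0 : Submodule F (Fin (q + 1) → F)}
    (hd : HasMinDist (C0 : Set (Fin (q + 1) → F)) q) :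
    ∀ c ∈ C0, c ≠ 0 → hammingNorm c = q := by
  have hq2 : 2 ≤ q := hq ▸ Fintype.one_lt_card
  obtain ⟨hlow, c₀, hc₀C, hc₀ne, hc₀wt⟩ := hd
  have hK2 : ∀ c ∈ C0, c ≠ 0 → ∀ i j : Fin (q + 1), i ≠ j → c i = 0 → c j = 0 → False := by
    intro c hc hcne i j hij hi hj
    have h1 : q ≤ hammingNorm c := hlow c hc hcne
    have h2 : hammingNorm c ≤ (q + 1) - 2 := by
      unfold hammingNorm
      calc (Finset.univ.filter fun t => c t ≠ 0).card
          ≤ (Finset.univ \ ({i, j} : Finset (Fin (q + 1)))).card := by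
            apply Finset.card_le_card
            intro t ht
            simp only [Finset.mem_filter] at ht
            simp only [Finset.mem_sdiff, Finset.mem_univ, true_and, Finset.mem_insert,
              Finset.mem_singleton]
            rintro (rfl | rfl)
            · exact ht.2 hi
            · exact ht.2 hj
        _ = (q + 1) - 2 := by
            rw [Finset.card_sdiff_of_subset (Finset.subset_univ _), Finset.card_univ, Fintype.card_fin,
              Finset.card_insert_of_notMem (by simpa using hij), Finset.card_singleton]
    omega
  intro c hc hcne
  have hlo := hlow c hc hcne
  suffices hz : ∃ i, c i = 0 by
    obtain ⟨i, hi⟩ := hz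
    have hup : hammingNorm c ≤ q := by
      unfold hammingNorm
      calc (Finset.univ.filter fun t => c t ≠ 0).card
          ≤ (Finset.univ \ ({i} : Finset (Fin (q + 1)))).card := by
            apply Finset.card_le_card
            intro t ht
            simp only [Finset.mem_filter] at ht
            simp only [Finset.mem_sdiff, Finset.mem_univ, true_and, Finset.mem_singleton]
            rintro rfl; exact ht.2 hi
        _ = q := by
            rw [Finset.card_sdiff_of_subset (Finset.subset_univ _), Finset.card_univ, Fintype.card_fin,
              Finset.card_singleton]
            omega
    omega
  by_contra hfull
  push_neg at hfull
  have hzero0 : ∃ i0, c₀ i0 = 0 := by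
    by_contra hf; push_neg at hf
    have : hammingNorm c₀ = q + 1 := by
      unfold hammingNorm
      rw [Finset.filter_true_of_mem (fun t _ => hf t), Finset.card_univ, Fintype.card_fin]
    omega
  obtain ⟨i0, hi0⟩ := hzero0
  have hc₀nz : ∀ j : Fin (q + 1), j ≠ i0 → c₀ j ≠ 0 := fun j hj hjz =>
    hK2 c₀ hc₀C hc₀ne j i0 hj hjz hi0
  set f : {j : Fin (q + 1) // j ≠ i0} → F := fun j => c j.1 * (c₀ j.1)⁻¹ with hf
  have hinj : Function.Injective f := by
    intro a b hab
    by_contra hne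
    have hvne : (a : Fin (q + 1)) ≠ (b : Fin (q + 1)) := fun hh => hne (Subtype.ext hh)
    set d : Fin (q + 1) → F := c - f a • c₀ with hdd
    have hdC : d ∈ C0 := C0.sub_mem hc (C0.smul_mem _ hc₀C)
    have hda : d a.1 = 0 := by
      simp only [hdd, Pi.sub_apply, Pi.smul_apply, smul_eq_mul, hf]
      rw [inv_mul_cancel_right₀ (hc₀nz a a.2), sub_self]
    have hdb : d b.1 = 0 := by
      simp only [hdd, Pi.sub_apply, Pi.smul_apply, smul_eq_mul, hf]
      have : c a.1 * (c₀ a.1)⁻¹ = c b.1 * (c₀ b.1)⁻¹ := hab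
      rw [this, inv_mul_cancel_right₀ (hc₀nz b b.2), sub_self]
    have hdne : d ≠ 0 := by
      intro h0
      have hceq : c = f a • c₀ := by
        have := sub_eq_zero.mp h0
        exact this
      have : c i0 = 0 := by rw [hceq]; simp [hi0]
      exact hfull i0 this
    exact hK2 d hdC hdne a.1 b.1 hvne hda hdb
  have hsurj : Function.Surjective f := by
    have hcard : Fintype.card {j : Fin (q + 1) // j ≠ i0} = Fintype.card F := by
      rw [hq, Fintype.card_subtype]
      rw [Finset.filter_ne', Finset.card_erase_of_mem (Finset.mem_univ _),
        Finset.card_univ, Fintype.card_fin]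
      omega
    exact ((Fintype.bijective_iff_injective_and_card f).2 ⟨hinj, hcard⟩).2
  obtain ⟨j, hj⟩ := hsurj 0
  have : c j.1 = 0 := by
    rcases mul_eq_zero.mp hj with h | h
    · exact h
    · exact absurd (inv_eq_zero.mp h) (hc₀nz j j.2)
  exact hfull j.1 this

/-- lower bound for the weight of a nonzero EII array. -/
lemma EII_wt_lower {q : ℕ} {C0 : Submodule F (Fin (q + 1) → F)}
    (hC0dist : MinDistAtLeast (C0 : Set (Fin (q + 1) → F)) q)
    (hC0sys : SystematicOn C0 ((q + 1) - (q - 1)))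
    {m s1 : ℕ} {V : Submodule F (Fin m → Fin ((q + 1) - (q - 1)) → F)}
    (hV : MinDistAtLeast (V : Set (Fin m → Fin ((q + 1) - (q - 1)) → F)) (s1 + 1))
    (A : Matrix (Fin m) (Fin (q + 1)) F) (hrows : ∀ r, A r ∈ C0)
    (hsymb : colSymb A 0 ((q + 1) - (q - 1)) ∈ V) (hA : A ≠ 0) :
    q * (s1 + 1) ≤ arrayWt A := by
  classical
  have hsym_row : ∀ r, A r = 0 ↔ colSymb A 0 ((q + 1) - (q - 1)) r = 0 := by
    intro r
    constructor
    · intro hh; rw [colSymb_eq_sysMap, hh, map_zero]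
    · intro hh
      exact sysMap_eq_zero_of_mem hC0sys (hrows r) (by rw [← colSymb_eq_sysMap]; exact hh)
  have hAsymbne : colSymb A 0 ((q + 1) - (q - 1)) ≠ 0 := by
    intro h0
    apply hA
    funext r c
    have h1 : A r = 0 := (hsym_row r).2 (congrFun h0 r)
    exact congrFun h1 c
  have hcard : s1 + 1 ≤ (Finset.univ.filter fun r : Fin m => A r ≠ 0).card := by
    have h1 := hV _ hsymb hAsymbne
    unfold hammingNorm at h1
    have h2 : (Finset.univ.filter fun r : Fin m => colSymb A 0 ((q + 1) - (q - 1)) r ≠ 0)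
        = (Finset.univ.filter fun r : Fin m => A r ≠ 0) := by
      apply Finset.filter_congr
      intro r _
      rw [not_iff_not]
      exact (hsym_row r).symm
    rwa [h2] at h1
  calc q * (s1 + 1) = (s1 + 1) * q := mul_comm _ _
    _ ≤ (Finset.univ.filter fun r : Fin m => A r ≠ 0).card * q :=
        Nat.mul_le_mul_right _ hcard
    _ = ∑ _r ∈ (Finset.univ.filter fun r : Fin m => A r ≠ 0), q := by
        rw [Finset.sum_const, smul_eq_mul]
    _ ≤ ∑ r ∈ (Finset.univ.filter fun r : Fin m => A r ≠ 0), hammingNorm (A r) := by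
        apply Finset.sum_le_sum
        intro r hr
        simp only [Finset.mem_filter] at hr
        exact hC0dist (A r) (hrows r) hr.2
    _ ≤ ∑ r : Fin m, hammingNorm (A r) :=
        Finset.sum_le_sum_of_subset (Finset.filter_subset _ _)
    _ = arrayWt A := (arrayWt_eq_sum A).symm

end Machinery
section Machinery2

variable {F : Type*} [Field F] [Fintype F] [DecidableEq F]

lemma finrank_fun_fun (F : Type*) [Field F] (a b : ℕ) :
    Module.finrank F (Fin a → Fin b → F) = a * b := by
  rw [Module.finrank_pi_fintype]
  simp [Module.finrank_pi]

/-- extension by zero, for shortening. -/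
def extendMap (F : Type*) [Field F] (k a b : ℕ) (hab : a ≤ b) :
    (Fin a → Fin k → F) →ₗ[F] (Fin b → Fin k → F) where
  toFun v := fun r => if h : (r : ℕ) < a then v ⟨r, h⟩ else 0
  map_add' x y := by funext r; by_cases h : (r : ℕ) < a <;> simp [h]
  map_smul' c x := by funext r; by_cases h : (r : ℕ) < a <;> simp [h]

/-- truncation to the first `a` coordinates. -/
def truncMap (F : Type*) [Field F] (k a b : ℕ) (hab : a ≤ b) :
    (Fin b → Fin k → F) →ₗ[F] (Fin a → Fin k → F) where
  toFun v := fun r => v (Fin.castLE hab r)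
  map_add' x y := rfl
  map_smul' c x := rfl

/-- projection to the last `j` coordinates. -/
def tailMap (F : Type*) [Field F] (k j b : ℕ) (hjb : j ≤ b) :
    (Fin b → Fin k → F) →ₗ[F] (Fin j → Fin k → F) where
  toFun v := fun t => v ⟨b - j + (t : ℕ), by omega⟩
  map_add' x y := rfl
  map_smul' c x := rfl

lemma extendMap_injective (k a b : ℕ) (hab : a ≤ b) :
    Function.Injective (extendMap F k a b hab) := by
  intro x y hxy
  funext r
  have := congrFun hxy ⟨(r : ℕ), lt_of_lt_of_le r.2 hab⟩
  simpa [extendMap, r.2] using this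

lemma hammingNorm_extendMap (k a b : ℕ) (hab : a ≤ b) (v : Fin a → Fin k → F) :
    hammingNorm (extendMap F k a b hab v) = hammingNorm v := by
  unfold hammingNorm
  refine Finset.card_bij'
    (fun (r : Fin b) hr => (⟨(r : ℕ), by
      by_contra hno
      simp only [Finset.mem_filter, Finset.mem_univ, true_and] at hr
      exact hr (by simp [extendMap, hno])⟩ : Fin a))
    (fun (t : Fin a) _ => (⟨(t : ℕ), lt_of_lt_of_le t.2 hab⟩ : Fin b)) ?_ ?_ ?_ ?_
  · intro r hr
    simp only [Finset.mem_filter, Finset.mem_univ, true_and] at hr ⊢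
    intro h0
    apply hr
    by_cases h : (r : ℕ) < a
    · simp only [extendMap, LinearMap.coe_mk, AddHom.coe_mk, dif_pos h]
      exact h0
    · simp [extendMap, h]
  · intro t ht
    simp only [Finset.mem_filter, Finset.mem_univ, true_and] at ht ⊢
    simpa [extendMap, t.2] using ht
  · intro r hr; ext; rfl
  · intro t ht; ext; rfl

/-- the linear equivalence between `m × n` matrices and vectors of length `m * n`. -/
noncomputable def vecEquiv (F : Type*) [Field F] (m n : ℕ) :
    Matrix (Fin m) (Fin n) F ≃ₗ[F] (Fin (m * n) → F) where
  toFun A := fun t => A (finProdFinEquiv.symm t).1 (finProdFinEquiv.symm t).2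
  invFun v := fun r c => v (finProdFinEquiv (r, c))
  map_add' x y := by funext t; simp [Matrix.add_apply]
  map_smul' c x := by funext t; simp [Matrix.smul_apply]
  left_inv A := by
    funext r c
    show A (finProdFinEquiv.symm (finProdFinEquiv (r, c))).1
        (finProdFinEquiv.symm (finProdFinEquiv (r, c))).2 = A r c
    rw [Equiv.symm_apply_apply]
  right_inv v := by
    funext t
    show v (finProdFinEquiv ((finProdFinEquiv.symm t).1, (finProdFinEquiv.symm t).2)) = v t
    rw [Prod.mk.eta, Equiv.apply_symm_apply]

lemma hammingNorm_vecEquiv {m n : ℕ} (A : Matrix (Fin m) (Fin n) F) :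
    hammingNorm (vecEquiv F m n A) = arrayWt A := by
  unfold arrayWt
  exact hammingNorm_comp_equiv finProdFinEquiv.symm (fun p : Fin m × Fin n => A p.1 p.2)

/-- the elements of the `dOpt` defining set are bounded by `N`. -/
lemma dOpt_bddAbove (F : Type*) [Field F] [Fintype F] [DecidableEq F] (N K : ℕ) :
    ∀ d ∈ {d : ℕ | ∃ C : Submodule F (Fin N → F),
      Module.finrank F C = K ∧ HasMinDist (C : Set (Fin N → F)) d}, d ≤ N := by
  rintro d ⟨C, -, -, c, -, -, hwt⟩
  rw [← hwt]
  calc hammingNorm c ≤ Fintype.card (Fin N) := hammingNorm_le_card_fintype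
    _ = N := Fintype.card_fin N

lemma le_dOpt {N K d : ℕ} (h : ∃ C : Submodule F (Fin N → F),
    Module.finrank F C = K ∧ HasMinDist (C : Set (Fin N → F)) d) :
    d ≤ dOpt F N K :=
  le_csSup ⟨N, dOpt_bddAbove F N K⟩ h

/-- double counting: weight bound for two-dimensional codes (Griesmer-type bound). -/
lemma dim2_wt_bound {q N d : ℕ} (hq : Fintype.card F = q)
    (C : Submodule F (Fin N → F)) (h2 : Module.finrank F C = 2)
    (hd : HasMinDist (C : Set (Fin N → F)) d) :
    (q * q - 1) * d ≤ N * (q * q - q) := by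
  classical
  haveI : Fintype C := Fintype.ofFinite _
  have hq2 : 2 ≤ q := hq ▸ Fintype.one_lt_card
  have hcard : Fintype.card C = q * q := by
    rw [Module.card_eq_pow_finrank (K := F) (V := C), hq, h2]; ring
  have key : ∀ i : Fin N,
      (Finset.univ.filter fun c : C => (c : Fin N → F) i ≠ 0).card ≤ q * q - q := by
    intro i
    set φ : C →ₗ[F] F := (LinearMap.proj i).comp C.subtype with hφ
    haveI : Fintype (LinearMap.ker φ) := Fintype.ofFinite _
    have hrange : Module.finrank F (LinearMap.range φ) ≤ 1 := by
      have h1 := Submodule.finrank_le (LinearMap.range φ)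
      simpa [Module.finrank_self] using h1
    have hkerrank : 1 ≤ Module.finrank F (LinearMap.ker φ) := by
      have h1 := LinearMap.finrank_range_add_finrank_ker φ
      rw [h2] at h1
      omega
    have hkercard : q ≤ Fintype.card (LinearMap.ker φ) := by
      rw [Module.card_eq_pow_finrank (K := F) (V := LinearMap.ker φ), hq]
      calc q = q ^ 1 := (pow_one q).symm
        _ ≤ q ^ Module.finrank F (LinearMap.ker φ) :=
            Nat.pow_le_pow_right (by omega) hkerrank
    have hker_filter : Fintype.card (LinearMap.ker φ)
        = (Finset.univ.filter fun c : C => (c : Fin N → F) i = 0).card := by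
      rw [← Fintype.card_subtype]
      apply Fintype.card_congr
      apply Equiv.subtypeEquivRight
      intro x
      rw [LinearMap.mem_ker]
      exact Iff.rfl
    have hsplit := Finset.card_filter_add_card_filter_not
      (s := (Finset.univ : Finset C)) (p := fun c : C => (c : Fin N → F) i = 0)
    rw [Finset.card_univ, hcard] at hsplit
    have hnot : (Finset.univ.filter fun c : C => ¬ ((c : Fin N → F) i = 0)).card
        = (Finset.univ.filter fun c : C => (c : Fin N → F) i ≠ 0).card := rfl
    omega
  have hwt_sum : ∀ c : C, hammingNorm (c : Fin N → F)
      = ∑ i : Fin N, if (c : Fin N → F) i ≠ 0 then 1 else 0 := by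
    intro c
    unfold hammingNorm
    rw [Finset.card_filter]
  have hfilter_card : (Finset.univ.filter fun c : C => ¬ (c = 0)).card = q * q - 1 := by
    have hsplit := Finset.card_filter_add_card_filter_not
      (s := (Finset.univ : Finset C)) (p := fun c : C => c = 0)
    rw [Finset.card_univ, hcard] at hsplit
    have hone : (Finset.univ.filter fun c : C => c = 0).card = 1 := by
      rw [Finset.filter_eq', if_pos (Finset.mem_univ _), Finset.card_singleton]
    omega
  have hlower : (q * q - 1) * d ≤ ∑ c : C, hammingNorm (c : Fin N → F) := by
    calc (q * q - 1) * d
        = ∑ _c ∈ (Finset.univ.filter fun c : C => ¬ (c = 0)), d := by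
          rw [Finset.sum_const, smul_eq_mul, hfilter_card]
      _ ≤ ∑ c ∈ (Finset.univ.filter fun c : C => ¬ (c = 0)),
            hammingNorm (c : Fin N → F) := by
          apply Finset.sum_le_sum
          intro c hc
          simp only [Finset.mem_filter] at hc
          refine hd.1 (c : Fin N → F) c.2 ?_
          intro h0
          exact hc.2 (Subtype.ext h0)
      _ ≤ ∑ c : C, hammingNorm (c : Fin N → F) :=
          Finset.sum_le_sum_of_subset (Finset.filter_subset _ _)
  have hupper : ∑ c : C, hammingNorm (c : Fin N → F) ≤ N * (q * q - q) := by
    calc ∑ c : C, hammingNorm (c : Fin N → F)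
        = ∑ c : C, ∑ i : Fin N, (if (c : Fin N → F) i ≠ 0 then 1 else 0) :=
          Finset.sum_congr rfl fun c _ => hwt_sum c
      _ = ∑ i : Fin N, ∑ c : C, (if (c : Fin N → F) i ≠ 0 then 1 else 0) :=
          Finset.sum_comm
      _ ≤ ∑ _i : Fin N, (q * q - q) := by
          apply Finset.sum_le_sum
          intro i _
          rw [← Finset.card_filter]
          exact key i
      _ = N * (q * q - q) := by
          rw [Finset.sum_const, Finset.card_univ, Fintype.card_fin, smul_eq_mul]
  omega

end Machinery2
section Construct

variable {F : Type*} [Field F] [Fintype F] [DecidableEq F]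

lemma constructed_code {q m s1 j : ℕ} (hq : Fintype.card F = q)
    {C0 : Submodule F (Fin (q + 1) → F)}
    (hC0dist : MinDistAtLeast (C0 : Set (Fin (q + 1) → F)) q)
    (hC0sys : SystematicOn C0 ((q + 1) - (q - 1)))
    {V0 : Submodule F (Fin m → Fin ((q + 1) - (q - 1)) → F)}
    (hV0dim : Module.finrank F V0 = (m - s1) * ((q + 1) - (q - 1)))
    (hV0dist : MinDistAtLeast (V0 : Set (Fin m → Fin ((q + 1) - (q - 1)) → F)) (s1 + 1))
    (hs1m : s1 + 1 ≤ m) (hj : j < m - s1) :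
    ∃ d', q * (s1 + 1) ≤ d' ∧ ∃ Cc : Submodule F (Fin ((m - j) * (q + 1)) → F),
      Module.finrank F Cc = 2 * (m - s1) - 2 * j ∧
      HasMinDist (Cc : Set (Fin ((m - j) * (q + 1)) → F)) d' := by
  classical
  have hq2 : 2 ≤ q := hq ▸ Fintype.one_lt_card
  have hk2 : (q + 1) - (q - 1) = 2 := by omega
  have hjm : j ≤ m := by omega
  have hmj : m - j ≤ m := by omega
  set ι := extendMap F ((q + 1) - (q - 1)) (m - j) m hmj with hι
  set Vj := V0.comap ι with hVj
  have hVj_dist : MinDistAtLeast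
      (Vj : Set (Fin (m - j) → Fin ((q + 1) - (q - 1)) → F)) (s1 + 1) := by
    intro v hv hvne
    have h2 : ι v ≠ 0 := fun h0 =>
      hvne (extendMap_injective _ _ _ _ (by rw [h0, map_zero]))
    have h3 := hV0dist (ι v) hv h2
    rwa [hammingNorm_extendMap] at h3
  have hub : Module.finrank F Vj ≤ (m - j - s1) * ((q + 1) - (q - 1)) := by
    set τ := ((truncMap F ((q + 1) - (q - 1)) (m - j - s1) (m - j) (by omega)).comp
      Vj.subtype) with hτ
    have hτinj : Function.Injective τ := by
      rw [← LinearMap.ker_eq_bot]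
      apply (Submodule.eq_bot_iff _).2
      intro x hx
      rw [LinearMap.mem_ker] at hx
      by_contra hne
      have hxvalne : (x : Fin (m - j) → Fin ((q + 1) - (q - 1)) → F) ≠ 0 :=
        fun h => hne (Subtype.ext h)
      have hwt := hVj_dist x.1 x.2 hxvalne
      have hsupp : ∀ r : Fin (m - j), (r : ℕ) < m - j - s1 →
          (x : Fin (m - j) → Fin ((q + 1) - (q - 1)) → F) r = 0 := by
        intro r hr
        have h1 := congrFun hx ⟨(r : ℕ), hr⟩
        have hcast : Fin.castLE (by omega : m - j - s1 ≤ m - j) ⟨(r : ℕ), hr⟩ = r := by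
          apply Fin.ext; rfl
        rw [← hcast]
        exact h1
      have hwt2 : hammingNorm (x : Fin (m - j) → Fin ((q + 1) - (q - 1)) → F) ≤ s1 := by
        unfold hammingNorm
        have hsub : (Finset.univ.filter fun r : Fin (m - j) =>
              (x : Fin (m - j) → Fin ((q + 1) - (q - 1)) → F) r ≠ 0)
            ⊆ Finset.univ.filter fun r : Fin (m - j) => ¬ ((r : ℕ) < m - j - s1) := by
          intro r hr
          simp only [Finset.mem_filter, Finset.mem_univ, true_and] at hr ⊢
          intro hlt
          exact hr (hsupp r hlt)
        have hcards := Finset.card_filter_add_card_filter_not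
          (s := (Finset.univ : Finset (Fin (m - j))))
          (p := fun r : Fin (m - j) => (r : ℕ) < m - j - s1)
        rw [Finset.card_univ, Fintype.card_fin] at hcards
        have hltc := card_filter_fin_lt (b := m - j) (a := m - j - s1) (by omega)
        have hcc := Finset.card_le_card hsub
        omega
      omega
    calc Module.finrank F Vj
        ≤ Module.finrank F (Fin (m - j - s1) → Fin ((q + 1) - (q - 1)) → F) :=
          LinearMap.finrank_le_finrank_of_injective hτinj
      _ = (m - j - s1) * ((q + 1) - (q - 1)) := finrank_fun_fun F _ _
  have hlb : (m - s1) * ((q + 1) - (q - 1))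
      ≤ j * ((q + 1) - (q - 1)) + Module.finrank F Vj := by
    set π := ((tailMap F ((q + 1) - (q - 1)) j m hjm).comp V0.subtype) with hπ
    have hrn := LinearMap.finrank_range_add_finrank_ker π
    rw [hV0dim] at hrn
    have hrange : Module.finrank F (LinearMap.range π) ≤ j * ((q + 1) - (q - 1)) := by
      calc Module.finrank F (LinearMap.range π)
          ≤ Module.finrank F (Fin j → Fin ((q + 1) - (q - 1)) → F) :=
            Submodule.finrank_le _
        _ = j * ((q + 1) - (q - 1)) := finrank_fun_fun F _ _
    have hker_le : Module.finrank F (LinearMap.ker π) ≤ Module.finrank F Vj := by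
      set ψ0 := ((truncMap F ((q + 1) - (q - 1)) (m - j) m hmj).comp
        (V0.subtype.comp (LinearMap.ker π).subtype)) with hψ0
      have hkey : ∀ x : LinearMap.ker π, ι (ψ0 x) = x.1.1 := by
        intro x
        funext r
        by_cases h : (r : ℕ) < m - j
        · show (if hh : (r : ℕ) < m - j then (ψ0 x) ⟨(r : ℕ), hh⟩ else 0) = x.1.1 r
          rw [dif_pos h]
          rfl
        · show (if hh : (r : ℕ) < m - j then (ψ0 x) ⟨(r : ℕ), hh⟩ else 0) = x.1.1 r
          rw [dif_neg h]
          have hx := x.2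
          rw [LinearMap.mem_ker] at hx
          have hidx : (⟨m - j + ((r : ℕ) - (m - j)), by omega⟩ : Fin m) = r := by
            apply Fin.ext
            show m - j + ((r : ℕ) - (m - j)) = (r : ℕ)
            omega
          have h1 : x.1.1 ⟨m - j + ((r : ℕ) - (m - j)), by omega⟩ = 0 := by
            have h2 := congrFun hx ⟨(r : ℕ) - (m - j), by omega⟩
            exact h2
          rw [hidx] at h1
          exact h1.symm
      have hψmem : ∀ x : LinearMap.ker π, ψ0 x ∈ Vj := by
        intro x
        rw [hVj, Submodule.mem_comap]
        rw [hkey x]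
        exact x.1.2
      set ψ : LinearMap.ker π →ₗ[F] Vj := LinearMap.codRestrict Vj ψ0 hψmem with hψ
      have hψinj : Function.Injective ψ := by
        intro x y hxy
        have h1 : ψ0 x = ψ0 y := congrArg Subtype.val hxy
        apply Subtype.ext; apply Subtype.ext
        rw [← hkey x, ← hkey y, h1]
      exact LinearMap.finrank_le_finrank_of_injective hψinj
    omega
  have hVjrank : Module.finrank F Vj = 2 * (m - s1) - 2 * j := by
    have hub2 : Module.finrank F Vj ≤ (m - j - s1) * 2 :=
      le_trans hub (le_of_eq (by rw [hk2]))
    have hlb2 : (m - s1) * 2 ≤ j * 2 + Module.finrank F Vj := by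
      refine le_trans (le_of_eq (by rw [hk2])) (le_trans hlb ?_)
      exact Nat.add_le_add_right (le_of_eq (by rw [hk2])) _
    omega
  set L := rowEnc C0 hC0sys (m - j) with hL
  set Wmat := Vj.map L with hWmat
  set Wvec := Wmat.map (vecEquiv F (m - j) (q + 1)).toLinearMap with hWvec
  have hWmat_rank : Module.finrank F Wmat = 2 * (m - s1) - 2 * j := by
    rw [← hVjrank]
    exact (LinearEquiv.finrank_eq (Submodule.equivMapOfInjective _
      (rowEnc_injective C0 hC0sys (m - j)) Vj)).symm
  have hWvec_rank : Module.finrank F Wvec = 2 * (m - s1) - 2 * j := by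
    rw [← hWmat_rank]
    exact (LinearEquiv.finrank_eq (Submodule.equivMapOfInjective _
      (vecEquiv F (m - j) (q + 1)).injective Wmat)).symm
  have hWvec_low : ∀ x ∈ Wvec, x ≠ 0 → q * (s1 + 1) ≤ hammingNorm x := by
    intro x hx hxne
    rw [Submodule.mem_map] at hx
    obtain ⟨A, hA, rfl⟩ := hx
    have hAcar : A ∈ OneLevelEII C0 Vj 0 := by
      rw [← map_rowEnc_carrier hC0sys Vj]
      exact hA
    obtain ⟨-, hrows, hsymb⟩ := hAcar
    have hAne : A ≠ 0 := by
      intro h0; apply hxne; rw [h0, map_zero]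
    have hcoe : ((vecEquiv F (m - j) (q + 1)).toLinearMap A)
        = vecEquiv F (m - j) (q + 1) A := rfl
    rw [hcoe, hammingNorm_vecEquiv]
    exact EII_wt_lower hC0dist hC0sys hVj_dist A hrows hsymb hAne
  have hWvec_ne : ∃ c ∈ (Wvec : Set (Fin ((m - j) * (q + 1)) → F)), c ≠ 0 := by
    have hne_bot : Wvec ≠ ⊥ := by
      intro h0
      rw [h0, finrank_bot] at hWvec_rank
      omega
    obtain ⟨b, hb, hbne⟩ := Submodule.exists_mem_ne_zero_of_ne_bot hne_bot
    exact ⟨b, hb, hbne⟩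
  refine ⟨sInf {d : ℕ | ∃ c ∈ (Wvec : Set (Fin ((m - j) * (q + 1)) → F)),
    c ≠ 0 ∧ hammingNorm c = d}, ?_, Wvec, hWvec_rank, hasMinDist_sInf hWvec_ne⟩
  obtain ⟨c, hc, hcne, hcwt⟩ := (hasMinDist_sInf hWvec_ne).2
  rw [← hcwt]
  exact hWvec_low c hc hcne

end Construct

/-- For `q` a prime power (realized as the cardinality of the field `F`),
the 1-level EII code of `m × (q+1)` arrays with `u0 = q−1`, `u1 = q+1`, horizontal code a
`[q+1,2,q]` MDS code and vertical code an `[m, m−s1, s1+1]` MDS code over `F²`, has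
dimension `2(m−s1)`, minimum distance exactly `q(s1+1)`, and meets bound (3). -/
theorem stmt8 {F : Type*} [Field F] [Fintype F] [DecidableEq F]
    {q m s0 s1 : ℕ} (hq : Fintype.card F = q)
    (hmq : m ≤ q ^ 2 + 1) (hs1lo : 2 ≤ s1) (hs1hi : s1 ≤ m - 1)
    (hm : m = s0 + s1) (hs0 : 1 ≤ s0)
    (C0 : Submodule F (Fin (q + 1) → F))
    (hC0dim : Module.finrank F C0 = 2)
    (hC0dist : HasMinDist (C0 : Set (Fin (q + 1) → F)) q)
    (hC0sys : SystematicOn C0 ((q + 1) - (q - 1)))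
    (V0 : Submodule F (Fin m → Fin ((q + 1) - (q - 1)) → F))
    (hV0dim : Module.finrank F V0 = (m - s1) * ((q + 1) - (q - 1)))
    (hV0dist : HasMinDist (V0 : Set (Fin m → Fin ((q + 1) - (q - 1)) → F)) (s1 + 1)) :
    (∃ W : Submodule F (Matrix (Fin m) (Fin (q + 1)) F),
        (W : Set (Matrix (Fin m) (Fin (q + 1)) F)) = OneLevelEII C0 V0 0 ∧
        Module.finrank F W = 2 * (m - s1)) ∧
    ((∀ A ∈ OneLevelEII C0 V0 0, A ≠ 0 → q * (s1 + 1) ≤ arrayWt A) ∧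
      (∃ A ∈ OneLevelEII C0 V0 0, A ≠ 0 ∧ arrayWt A = q * (s1 + 1))) ∧
    q * (s1 + 1) =
      sInf {d : ℕ | ∃ j : ℕ, j < (2 * (m - s1) + 1) / 2 ∧
        d = dOpt F ((m - j) * (q + 1)) (2 * (m - s1) - 2 * j)} := by
  have hq2 : 2 ≤ q := hq ▸ Fintype.one_lt_card
  have hk2 : (q + 1) - (q - 1) = 2 := by omega
  have hms1 : 1 ≤ m - s1 := by omega
  have hs1m : s1 + 1 ≤ m := by omega
  refine ⟨⟨V0.map (rowEnc C0 hC0sys m), map_rowEnc_carrier hC0sys V0, ?_⟩, ⟨?_, ?_⟩, ?_⟩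
  · -- dimension
    rw [← LinearEquiv.finrank_eq (Submodule.equivMapOfInjective _
      (rowEnc_injective C0 hC0sys m) V0), hV0dim, hk2]
    ring
  · -- minimum distance lower bound
    rintro A ⟨-, hrows, hsymb⟩ hAne
    exact EII_wt_lower hC0dist.1 hC0sys hV0dist.1 A hrows hsymb hAne
  · -- achieving array
    obtain ⟨v, hv, hvne, hvwt⟩ := hV0dist.2
    refine ⟨rowEnc C0 hC0sys m v, ?_, ?_, ?_⟩
    · rw [← map_rowEnc_carrier hC0sys V0]
      exact Submodule.mem_map_of_mem hv
    · intro h0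
      apply hvne
      apply rowEnc_injective C0 hC0sys m
      rw [h0, map_zero]
    · rw [arrayWt_eq_sum]
      have hrow : ∀ r, hammingNorm (rowEnc C0 hC0sys m v r)
          = if v r ≠ 0 then q else 0 := by
        intro r
        rw [rowEnc_row]
        by_cases h : v r = 0
        · rw [if_neg (by simpa using h), h, (sysEquiv C0 hC0sys).symm.map_zero,
            ZeroMemClass.coe_zero, hammingNorm_zero]
        · rw [if_pos h]
          refine C0_weights hq hC0dist _ (SetLike.coe_mem _) ?_
          intro h0
          apply h
          have h1 : (sysEquiv C0 hC0sys).symm (v r) = 0 := Subtype.ext h0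
          exact ((sysEquiv C0 hC0sys).symm.map_eq_zero_iff).1 h1
      calc ∑ r : Fin m, hammingNorm (rowEnc C0 hC0sys m v r)
          = ∑ r : Fin m, (if v r ≠ 0 then q else 0) :=
            Finset.sum_congr rfl fun r _ => hrow r
        _ = ∑ _r ∈ Finset.univ.filter (fun r : Fin m => v r ≠ 0), q :=
            (Finset.sum_filter _ _).symm
        _ = (Finset.univ.filter (fun r : Fin m => v r ≠ 0)).card * q := by
            rw [Finset.sum_const, smul_eq_mul]
        _ = (s1 + 1) * q := by
            have hc : (Finset.univ.filter (fun r : Fin m => v r ≠ 0)).card = s1 + 1 := hvwt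
            rw [hc]
        _ = q * (s1 + 1) := mul_comm _ _
  · -- bound (3)
    have half : (2 * (m - s1) + 1) / 2 = m - s1 := by omega
    have key : ∀ jj : ℕ, jj < m - s1 → ∃ d', q * (s1 + 1) ≤ d' ∧
        ∃ Cc : Submodule F (Fin ((m - jj) * (q + 1)) → F),
          Module.finrank F Cc = 2 * (m - s1) - 2 * jj ∧
          HasMinDist (Cc : Set (Fin ((m - jj) * (q + 1)) → F)) d' :=
      fun jj hjj => constructed_code hq hC0dist.1 hC0sys hV0dim hV0dist.1 hs1m hjj
    have hjm : m - s1 - 1 < m - s1 := by omega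
    obtain ⟨d', hd'1, Cc, hr, hmd⟩ := key (m - s1 - 1) hjm
    have hdopt_eq : dOpt F ((m - (m - s1 - 1)) * (q + 1)) (2 * (m - s1) - 2 * (m - s1 - 1))
        = q * (s1 + 1) := by
      apply le_antisymm
      · refine csSup_le ⟨d', Cc, hr, hmd⟩ ?_
        rintro d ⟨C, hC2, hCd⟩
        have hC2' : Module.finrank F C = 2 := by rw [hC2]; omega
        have hb := dim2_wt_bound hq C hC2' hCd
        have hmm : m - (m - s1 - 1) = s1 + 1 := by omega
        rw [hmm] at hb
        have hqq : 4 ≤ q * q := by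
          calc 4 = 2 * 2 := rfl
            _ ≤ q * q := Nat.mul_le_mul hq2 hq2
        have hq1 : q ≤ q * q := Nat.le_mul_of_pos_left q (by omega)
        have hq0 : 1 ≤ q * q := by omega
        have hid : ((s1 + 1) * (q + 1)) * (q * q - q) = (q * q - 1) * (q * (s1 + 1)) := by
          zify [hq1, hq0]
          ring
        rw [hid] at hb
        exact Nat.le_of_mul_le_mul_left hb (by omega)
      · exact le_trans hd'1 (le_dOpt ⟨Cc, hr, hmd⟩)
    apply le_antisymm
    · refine le_csInf ⟨_, ⟨m - s1 - 1, by omega, rfl⟩⟩ ?_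
      rintro d ⟨jj, hjj, rfl⟩
      rw [half] at hjj
      obtain ⟨d2, hd2, Cc2, hr2, hmd2⟩ := key jj hjj
      exact le_trans hd2 (le_dOpt ⟨Cc2, hr2, hmd2⟩)
    · exact Nat.sInf_le ⟨m - s1 - 1, by omega, hdopt_eq.symm⟩
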